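/- Let θ : ℝ → ℝ^μ be a curve of critical points of the perturbed empirical risk: for every ε in a neighborhood of 0, ∇R(θ(ε)) + ε·∇ℓ_p(θ(ε)) = 0, where R : ℝ^μ → ℝ is twice continuously differentiable, ℓ_p : ℝ^μ → ℝ is continuously differentiable, θ is differentiable at 0, and the Hessian H = ∇²R(θ(0)) is invertible. Let ℓ_t : ℝ^μ → ℝ be differentiable at θ(0). Then the function ε ↦ ℓ_t(θ(ε)) is differentiable at 0 with derivative equal to −∇ℓ_t(θ(0))ᵀ · H⁻¹ · ∇ℓ_p(θ(0)). -/

import Mathlib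

open Matrix

/-- Evaluate a continuous linear functional on `Fin μ → ℝ` as a sum over basis vectors. -/
lemma clm_eval_sum {μ : ℕ} (L : (Fin μ → ℝ) →L[ℝ] ℝ) (v : Fin μ → ℝ) :
    L v = ∑ i, v i * L (Pi.single i 1) := by
  have hv : v = ∑ i, v i • (Pi.single i 1 : Fin μ → ℝ) := by
    funext j
    simp [Finset.sum_apply, Pi.single_apply]
  conv_lhs => rw [hv]
  rw [map_sum]
  simp [ContinuousLinearMap.map_smul, smul_eq_mul]

/-- `ε ↦ ε * g ε` has derivative `g 0` at `0` when `g` is continuous at `0`. -/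
lemma hasDerivAt_mul_of_continuousAt {g : ℝ → ℝ} (hg : ContinuousAt g 0) :
    HasDerivAt (fun ε => ε * g ε) (g 0) 0 := by
  rw [hasDerivAt_iff_tendsto_slope]
  have h1 : Filter.Tendsto g (nhdsWithin (0:ℝ) {(0:ℝ)}ᶜ) (nhds (g 0)) :=
    hg.continuousWithinAt.tendsto
  refine h1.congr' ?_
  filter_upwards [self_mem_nhdsWithin] with x hx
  have hx' : x ≠ 0 := hx
  simp [slope, hx']

/-- The rigorous core of the influence-function formula
`I_loss(θ̂, z_t, z_p) = −∇ℓ_t(θ̂)ᵀ H⁻¹ ∇ℓ_p(θ̂)`. -/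
theorem influence_loss_formula {μ : ℕ}
    (θ : ℝ → (Fin μ → ℝ)) (R ℓp ℓt : (Fin μ → ℝ) → ℝ)
    (gradR gradℓp gradℓt : (Fin μ → ℝ) → (Fin μ → ℝ))
    (hgradR : ∀ x i, gradR x i = fderiv ℝ R x (Pi.single i 1))
    (hgradℓp : ∀ x i, gradℓp x i = fderiv ℝ ℓp x (Pi.single i 1))
    (hgradℓt : ∀ x i, gradℓt x i = fderiv ℝ ℓt x (Pi.single i 1))
    (hR : ContDiff ℝ 2 R) (hℓp : ContDiff ℝ 1 ℓp)
    (hℓt : DifferentiableAt ℝ ℓt (θ 0))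
    (hθ : DifferentiableAt ℝ θ 0)
    (hcrit : ∀ᶠ ε in nhds (0 : ℝ), gradR (θ ε) + ε • gradℓp (θ ε) = 0)
    (H : Matrix (Fin μ) (Fin μ) ℝ)
    (hH : ∀ i j, H i j = fderiv ℝ (fun x => gradR x j) (θ 0) (Pi.single i 1))
    (hHinv : IsUnit H) :
    HasDerivAt (fun ε => ℓt (θ ε))
      (-(gradℓt (θ 0) ⬝ᵥ H⁻¹.mulVec (gradℓp (θ 0)))) 0 := by
  set θ0 := θ 0 with hθ0
  set v : Fin μ → ℝ := deriv θ 0 with hv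
  have hθv : HasDerivAt θ v 0 := hθ.hasDerivAt
  -- second derivative of R
  have hdR : Differentiable ℝ (fderiv ℝ R) :=
    (hR.fderiv_right (m := 1) (by norm_num)).differentiable (by norm_num)
  set L2 : (Fin μ → ℝ) →L[ℝ] ((Fin μ → ℝ) →L[ℝ] ℝ) := fderiv ℝ (fderiv ℝ R) θ0 with hL2
  have hL2' : HasFDerivAt (fderiv ℝ R) L2 θ0 := (hdR θ0).hasFDerivAt
  -- H in terms of L2
  have hHL2 : ∀ i j, H i j = L2 (Pi.single i 1) (Pi.single j 1) := by
    intro i j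
    have hfun : (fun x => gradR x j) = fun x => fderiv ℝ R x (Pi.single j 1) := by
      funext x; exact hgradR x j
    have hcomp0 := ((ContinuousLinearMap.apply ℝ ℝ (Pi.single j 1 : Fin μ → ℝ)).hasFDerivAt
      (x := fderiv ℝ R θ0)).comp θ0 hL2'
    have hcomp : HasFDerivAt (fun x => fderiv ℝ R x (Pi.single j 1))
        ((ContinuousLinearMap.apply ℝ ℝ (Pi.single j 1)).comp L2) θ0 := hcomp0
    rw [hH i j, hfun, hcomp.fderiv]
    rfl
  -- symmetry of the second derivative
  have hRd : Differentiable ℝ R := hR.differentiable (by norm_num)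
  have hsymm : ∀ a b, L2 a b = L2 b a :=
    second_derivative_symmetric (fun y => (hRd y).hasFDerivAt) hL2'
  have hHsymm : Hᵀ = H := by
    ext i j
    rw [Matrix.transpose_apply, hHL2 j i, hHL2 i j, hsymm]
  -- the key equation: vecMul v H = -gradℓp θ0
  have hkey : ∀ j, L2 v (Pi.single j 1) + gradℓp θ0 j = 0 := by
    intro j
    -- derivative of ε ↦ gradR (θ ε) j at 0
    have hcompj0 := ((ContinuousLinearMap.apply ℝ ℝ (Pi.single j 1 : Fin μ → ℝ)).hasFDerivAt
      (x := fderiv ℝ R θ0)).comp θ0 hL2'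
    have hcompj : HasFDerivAt (fun x => fderiv ℝ R x (Pi.single j 1))
        ((ContinuousLinearMap.apply ℝ ℝ (Pi.single j 1)).comp L2) θ0 := hcompj0
    have h1 : HasDerivAt (fun ε => gradR (θ ε) j) (L2 v (Pi.single j 1)) 0 := by
      have := hcompj.comp_hasDerivAt 0 hθv
      refine HasDerivAt.congr_of_eventuallyEq this ?_
      filter_upwards with x
      simp [Function.comp, hgradR]
    -- derivative of ε ↦ ε * gradℓp (θ ε) j at 0
    have hgc : ContinuousAt (fun ε => gradℓp (θ ε) j) 0 := by
      have hfc : Continuous (fderiv ℝ ℓp) := hℓp.continuous_fderiv (by norm_num)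
      have : ContinuousAt (fun ε => fderiv ℝ ℓp (θ ε) (Pi.single j 1)) 0 := by
        exact ((ContinuousLinearMap.apply ℝ ℝ (Pi.single j 1)).continuous.comp hfc).continuousAt.comp
          hθ.continuousAt
      refine this.congr ?_
      filter_upwards with x
      simp [hgradℓp]
    have h2 : HasDerivAt (fun ε => ε * gradℓp (θ ε) j) (gradℓp θ0 j) 0 :=
      hasDerivAt_mul_of_continuousAt hgc
    -- sum is eventually 0
    have h3 : HasDerivAt (fun ε => gradR (θ ε) j + ε * gradℓp (θ ε) j)
        (L2 v (Pi.single j 1) + gradℓp θ0 j) 0 := h1.add h2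
    have h4 : HasDerivAt (fun _ : ℝ => (0:ℝ)) (0:ℝ) 0 := hasDerivAt_const 0 0
    have h5 : HasDerivAt (fun ε => gradR (θ ε) j + ε * gradℓp (θ ε) j) (0:ℝ) 0 := by
      refine HasDerivAt.congr_of_eventuallyEq h4 ?_
      filter_upwards [hcrit] with ε hε
      have := congrFun hε j
      simpa using this
    linarith [h5.unique h3]
  have hvec : Matrix.vecMul v H = -(gradℓp θ0) := by
    funext j
    have hLH : L2 v (Pi.single j 1) = ∑ i, v i * H i j := by
      have h := clm_eval_sum (L2.flip (Pi.single j 1)) v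
      simp only [ContinuousLinearMap.flip_apply] at h
      rw [h]
      exact Finset.sum_congr rfl fun i _ => by rw [hHL2 i j]
    have hvH : Matrix.vecMul v H j = ∑ i, v i * H i j := by
      simp [Matrix.vecMul, dotProduct]
    rw [hvH, ← hLH]
    have := hkey j
    simp only [Pi.neg_apply]
    linarith
  -- solve for v
  have hdet : IsUnit H.det := (Matrix.isUnit_iff_isUnit_det H).mp hHinv
  have hvsol : v = Matrix.vecMul (-(gradℓp θ0)) H⁻¹ := by
    rw [← hvec, Matrix.vecMul_vecMul, Matrix.mul_nonsing_inv H hdet, Matrix.vecMul_one]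
  -- chain rule
  have hchain : HasDerivAt (fun ε => ℓt (θ ε)) (fderiv ℝ ℓt θ0 v) 0 := by
    have := hℓt.hasFDerivAt.comp_hasDerivAt 0 hθv
    exact this
  -- compute the value
  have hval : fderiv ℝ ℓt θ0 v = -(gradℓt θ0 ⬝ᵥ H⁻¹.mulVec (gradℓp θ0)) := by
    rw [clm_eval_sum (fderiv ℝ ℓt θ0) v]
    have h6 : ∑ i, v i * fderiv ℝ ℓt θ0 (Pi.single i 1) = v ⬝ᵥ gradℓt θ0 := by
      refine Finset.sum_congr rfl fun i _ => ?_
      rw [hgradℓt]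
    rw [h6, hvsol]
    have h7 : Matrix.vecMul (-(gradℓp θ0)) H⁻¹ = H⁻¹.mulVec (-(gradℓp θ0)) := by
      rw [← Matrix.vecMul_transpose]
      
      rw [Matrix.transpose_nonsing_inv, hHsymm]
    rw [h7, Matrix.mulVec_neg, neg_dotProduct, dotProduct_comm]
  rw [← hval]
  exact hchain
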